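/- The function f(t) = ∑_{n=0}^∞ f_n(t), where f₀(t) = a and f_{n+1}(t) = -∫₀ᵗ ∫₀^{τ} ω²(s) f_n(s) ds dτ with ω² continuous and bounded on ℝ, is twice differentiable and satisfies f''(t) + ω²(t) f(t) = 0 with f(0) = a and f'(0) = 0. -/

import Mathlib

open intervalIntegral MeasureTheory

private lemma prim_hasDerivAt {g : ℝ → ℝ} (hg : Continuous g) (t : ℝ) :
    HasDerivAt (fun u => ∫ x in (0:ℝ)..u, g x) (g t) t :=
  (hg.integral_hasStrictDerivAt 0 t).hasDerivAt

private lemma prim_continuous {g : ℝ → ℝ} (hg : Continuous g) :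
    Continuous (fun u => ∫ x in (0:ℝ)..u, g x) :=
  Differentiable.continuous (fun t => (prim_hasDerivAt hg t).differentiableAt)

private lemma abs_le_of_mem_uIoc {u τ : ℝ} (hu : u ∈ Set.uIoc 0 τ) : |u| ≤ |τ| := by
  rcases le_total 0 τ with h | h
  · rw [Set.uIoc_of_le h] at hu
    rw [abs_of_pos hu.1, abs_of_nonneg h]; exact hu.2
  · rw [Set.uIoc_of_ge h] at hu
    rw [abs_of_nonpos hu.2, abs_of_nonpos h]; linarith [hu.1]

private lemma key_bound {g : ℝ → ℝ} (_hg : Continuous g) {k : ℝ} {m : ℕ}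
    (hb : ∀ u, |g u| ≤ k * |u| ^ m) (s : ℝ) :
    |∫ u in (0:ℝ)..s, g u| ≤ k * |s| ^ (m + 1) / (m + 1 : ℝ) := by
  have hk : 0 ≤ k := by have := (abs_nonneg (g 1)).trans (hb 1); simpa using this
  have h1 : |∫ u in (0:ℝ)..s, g u| ≤ |∫ u in (0:ℝ)..s, k * |u| ^ m| := by
    rw [← Real.norm_eq_abs (∫ u in (0:ℝ)..s, g u)]
    apply intervalIntegral.norm_integral_le_abs_of_norm_le
    · exact Filter.Eventually.of_forall fun u => hb u
    · exact (continuous_const.mul (continuous_abs.pow m)).intervalIntegrable _ _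
  refine h1.trans ?_
  rw [intervalIntegral.integral_const_mul, abs_mul, abs_of_nonneg hk, mul_div_assoc]
  gcongr
  have h2 : ‖∫ u in (0:ℝ)..s, |u| ^ m‖ = ‖∫ u in Set.uIoc (0:ℝ) s, |u| ^ m‖ :=
    intervalIntegral.norm_integral_eq_norm_integral_uIoc _
  have h3 : (∫ u in Set.uIoc (0:ℝ) s, |u| ^ m) = |s| ^ (m+1) / (m+1) := by
    have := integral_pow_abs_sub_uIoc (a := (0:ℝ)) (b := s) (n := m)
    simpa using this
  rw [Real.norm_eq_abs] at h2
  rw [h2, h3, Real.norm_eq_abs, abs_of_nonneg (by positivity)]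

theorem stmt_4 (a : ℝ) (ω2 : ℝ → ℝ) (hω : Continuous ω2)
    (C : ℝ) (hC : ∀ s, |ω2 s| ≤ C)
    (f : ℕ → ℝ → ℝ)
    (hf0 : ∀ s, f 0 s = a)
    (hfS : ∀ n s, f (n + 1) s = -∫ τ in (0 : ℝ)..s, ∫ u in (0 : ℝ)..τ, ω2 u * f n u)
    (F : ℝ → ℝ) (hF : ∀ t, F t = ∑' n : ℕ, f n t) :
    (∀ t, DifferentiableAt ℝ F t) ∧ (∀ t, DifferentiableAt ℝ (deriv F) t) ∧
      (∀ t, deriv (deriv F) t + ω2 t * F t = 0) ∧ F 0 = a ∧ deriv F 0 = 0 := by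
  have hC0 : 0 ≤ C := (abs_nonneg _).trans (hC 0)
  -- continuity of each term
  have hcont : ∀ n, Continuous (f n) := by
    intro n
    induction n with
    | zero =>
      have : f 0 = fun _ => a := funext hf0
      rw [this]; exact continuous_const
    | succ n ih =>
      have h1 : Continuous fun τ => ∫ u in (0:ℝ)..τ, ω2 u * f n u :=
        prim_continuous (hω.mul ih)
      have h2 : f (n+1) = fun s => -∫ τ in (0:ℝ)..s, ∫ u in (0:ℝ)..τ, ω2 u * f n u :=
        funext (hfS n)
      rw [h2]; exact (prim_continuous h1).neg
  -- factorial bound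
  have hbound : ∀ n s, |f n s| ≤ |a| * C ^ n * |s| ^ (2*n) / (n.factorial : ℝ) := by
    intro n
    induction n with
    | zero => intro s; simp [hf0]
    | succ n ih =>
      intro s
      have hfacpos : (0:ℝ) < (n.factorial : ℝ) := by
        exact_mod_cast n.factorial_pos
      have hb1 : ∀ u, |ω2 u * f n u| ≤ (|a| * C ^ (n+1) / (n.factorial : ℝ)) * |u| ^ (2*n) := by
        intro u
        rw [abs_mul]
        calc |ω2 u| * |f n u| ≤ C * (|a| * C ^ n * |u| ^ (2*n) / (n.factorial : ℝ)) :=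
              mul_le_mul (hC u) (ih u) (abs_nonneg _) hC0
          _ = (|a| * C ^ (n+1) / (n.factorial : ℝ)) * |u| ^ (2*n) := by ring
      have hb2 : ∀ τ, |∫ u in (0:ℝ)..τ, ω2 u * f n u| ≤
          (|a| * C ^ (n+1) / (n.factorial : ℝ) / (2*(n:ℝ)+1)) * |τ| ^ (2*n+1) := by
        intro τ
        have := key_bound (hω.mul (hcont n)) hb1 τ
        refine this.trans (le_of_eq ?_)
        push_cast
        ring
      have houter := key_bound (prim_continuous (hω.mul (hcont n))) hb2 s
      rw [hfS n s, abs_neg]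
      refine houter.trans ?_
      have hexp : 2*n+1+1 = 2*(n+1) := by ring
      rw [hexp, Nat.factorial_succ]
      push_cast
      have hn : (0:ℝ) ≤ (n:ℝ) := n.cast_nonneg
      have hL : |a| * C ^ (n + 1) / (n.factorial:ℝ) / (2 * (n:ℝ) + 1) * |s| ^ (2 * (n + 1)) /
            (2 * (n:ℝ) + 1 + 1)
          = (|a| * C ^ (n + 1) * |s| ^ (2 * (n + 1))) /
            ((n.factorial:ℝ) * ((2 * (n:ℝ) + 1) * (2 * (n:ℝ) + 2))) := by
        have h1 : ((n.factorial : ℝ)) ≠ 0 := ne_of_gt hfacpos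
        have h2 : (2 * (n:ℝ) + 1) ≠ 0 := by positivity
        have h3 : (2 * (n:ℝ) + 1 + 1) ≠ 0 := by positivity
        have h4 : (2 * (n:ℝ) + 2) ≠ 0 := by positivity
        field_simp
        ring_nf
      rw [hL]
      apply div_le_div_of_nonneg_left (by positivity) (by positivity)
      nlinarith [hfacpos, mul_nonneg hfacpos.le hn, mul_nonneg (mul_nonneg hfacpos.le hn) hn]
  -- summability of the majorant
  have hsummul : ∀ R : ℝ, Summable (fun n => |a| * C ^ n * R ^ (2*n) / (n.factorial : ℝ)) := by
    intro R
    have h := (Real.summable_pow_div_factorial (C * R^2)).mul_left |a|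
    refine h.congr fun n => ?_
    rw [mul_pow, pow_mul]
    ring
  have hsum : ∀ s, Summable fun n => f n s := fun s =>
    Summable.of_norm_bounded (hsummul |s|) fun n => by
      rw [Real.norm_eq_abs]; exact hbound n s
  -- continuity of F
  have hFc : Continuous F := by
    rw [continuous_iff_continuousAt]
    intro t
    set R : ℝ := |t| + 1 with hR
    have hmem : t ∈ Set.Ioo (-R) R := by
      constructor <;> [linarith [neg_abs_le t]; linarith [le_abs_self t]]
    have hs : ContinuousOn (fun x => ∑' n, f n x) (Set.Ioo (-R) R) := by
      apply continuousOn_tsum (fun n => (hcont n).continuousOn) (hsummul R)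
      intro n x hx
      rw [Real.norm_eq_abs]
      refine (hbound n x).trans ?_
      have hxR : |x| ≤ R := by
        rw [abs_le]; exact ⟨hx.1.le, hx.2.le⟩
      gcongr
    have hFeq : F = fun x => ∑' n, f n x := funext hF
    rw [hFeq]
    exact hs.continuousAt (isOpen_Ioo.mem_nhds hmem)
  have hωF : Continuous fun u => ω2 u * F u := hω.mul hFc
  -- inner swap
  have hswap1 : ∀ τ : ℝ, HasSum (fun n => ∫ u in (0:ℝ)..τ, ω2 u * f n u)
      (∫ u in (0:ℝ)..τ, ω2 u * F u) := by
    intro τ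
    apply intervalIntegral.hasSum_integral_of_dominated_convergence
      (bound := fun n (_ : ℝ) => C * (|a| * C ^ n * |τ| ^ (2*n) / (n.factorial : ℝ)))
    · exact fun n => (hω.mul (hcont n)).aestronglyMeasurable
    · intro n
      filter_upwards with u hu
      rw [Real.norm_eq_abs, abs_mul]
      have h1 : |u| ≤ |τ| := abs_le_of_mem_uIoc hu
      calc |ω2 u| * |f n u| ≤ C * (|a| * C ^ n * |u| ^ (2*n) / (n.factorial : ℝ)) :=
            mul_le_mul (hC u) (hbound n u) (abs_nonneg _) hC0
        _ ≤ C * (|a| * C ^ n * |τ| ^ (2*n) / (n.factorial : ℝ)) := by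
            gcongr
    · filter_upwards with u _
      exact (hsummul |τ|).mul_left C
    · exact intervalIntegrable_const
    · filter_upwards with u _
      rw [hF u] at *
      exact ((hsum u).hasSum.mul_left (ω2 u))
  -- outer swap and fixed-point equation
  have hfix : ∀ s, F s = a - ∫ τ in (0:ℝ)..s, ∫ u in (0:ℝ)..τ, ω2 u * F u := by
    intro s
    have hswap2 : HasSum (fun n => ∫ τ in (0:ℝ)..s, ∫ u in (0:ℝ)..τ, ω2 u * f n u)
        (∫ τ in (0:ℝ)..s, ∫ u in (0:ℝ)..τ, ω2 u * F u) := by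
      apply intervalIntegral.hasSum_integral_of_dominated_convergence
        (bound := fun n (_ : ℝ) => |s| * (C * (|a| * C ^ n * |s| ^ (2*n) / (n.factorial : ℝ))))
      · exact fun n => (prim_continuous (hω.mul (hcont n))).aestronglyMeasurable
      · intro n
        filter_upwards with τ hτ
        have hτs : |τ| ≤ |s| := abs_le_of_mem_uIoc hτ
        have h2 : ‖∫ u in (0:ℝ)..τ, ω2 u * f n u‖ ≤
            C * (|a| * C ^ n * |s| ^ (2*n) / (n.factorial : ℝ)) * |τ - 0| := by
          apply intervalIntegral.norm_integral_le_of_norm_le_const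
          intro u hu
          have h1 : |u| ≤ |s| := (abs_le_of_mem_uIoc hu).trans hτs
          rw [Real.norm_eq_abs, abs_mul]
          calc |ω2 u| * |f n u| ≤ C * (|a| * C ^ n * |u| ^ (2*n) / (n.factorial : ℝ)) :=
                mul_le_mul (hC u) (hbound n u) (abs_nonneg _) hC0
            _ ≤ C * (|a| * C ^ n * |s| ^ (2*n) / (n.factorial : ℝ)) := by
                gcongr
        refine h2.trans ?_
        rw [sub_zero]
        have hK : (0:ℝ) ≤ C * (|a| * C ^ n * |s| ^ (2*n) / (n.factorial : ℝ)) := by positivity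
        calc C * (|a| * C ^ n * |s| ^ (2*n) / (n.factorial : ℝ)) * |τ|
            ≤ C * (|a| * C ^ n * |s| ^ (2*n) / (n.factorial : ℝ)) * |s| := by gcongr
          _ = |s| * (C * (|a| * C ^ n * |s| ^ (2*n) / (n.factorial : ℝ))) := by ring
      · filter_upwards with τ _
        exact ((hsummul |s|).mul_left C).mul_left |s|
      · exact intervalIntegrable_const
      · filter_upwards with τ _
        exact hswap1 τ
    have h3 : (fun n => -∫ τ in (0:ℝ)..s, ∫ u in (0:ℝ)..τ, ω2 u * f n u) =
        fun n => f (n+1) s := funext fun n => (hfS n s).symm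
    have h4 : HasSum (fun n => f (n+1) s)
        (-(∫ τ in (0:ℝ)..s, ∫ u in (0:ℝ)..τ, ω2 u * F u)) := by
      rw [← h3]; exact hswap2.neg
    rw [hF s, Summable.tsum_eq_zero_add (hsum s), hf0, h4.tsum_eq]
    ring
  -- derivatives
  have hG' : ∀ τ, HasDerivAt (fun τ => ∫ u in (0:ℝ)..τ, ω2 u * F u) (ω2 τ * F τ) τ :=
    prim_hasDerivAt hωF
  have hGc : Continuous (fun τ => ∫ u in (0:ℝ)..τ, ω2 u * F u) := prim_continuous hωF
  have hFun : F = fun s => a - ∫ τ in (0:ℝ)..s, ∫ u in (0:ℝ)..τ, ω2 u * F u := funext hfix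
  have hFd : ∀ t, HasDerivAt F (-(∫ u in (0:ℝ)..t, ω2 u * F u)) t := by
    intro t
    exact ((prim_hasDerivAt hGc t).const_sub a).congr_of_eventuallyEq
      (Filter.Eventually.of_forall hfix)
  have hF' : deriv F = fun t => -(∫ u in (0:ℝ)..t, ω2 u * F u) :=
    funext fun t => (hFd t).deriv
  have hFd2 : ∀ t, HasDerivAt (deriv F) (-(ω2 t * F t)) t := by
    intro t
    rw [hF']
    exact (hG' t).neg
  refine ⟨fun t => (hFd t).differentiableAt, fun t => (hFd2 t).differentiableAt,
    fun t => ?_, ?_, ?_⟩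
  · rw [(hFd2 t).deriv]; ring
  · rw [hfix 0, intervalIntegral.integral_same, sub_zero]
  · rw [hF']
    simp
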